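/- Minimality of the closed-loop Lyapunov solution: for every V ∈ S, any symmetric matrix Σ ∈ ℝ^{n×n} satisfying Σ ⪰ Iₙ + X̄₁VΣVᵀX̄₁ᵀ also satisfies Σ ⪰ Σ_V; consequently, J(V) = min{ Tr((Q + VᵀŪ₀ᵀRŪ₀V)Σ) : Σ symmetric, Σ ⪰ Iₙ + X̄₁VΣVᵀX̄₁ᵀ }, with the minimum attained at Σ = Σ_V. -/

import Mathlib

open Matrix

noncomputable section

/-- Euclidean norm of a vector. -/
def eNorm {ι : Type*} [Fintype ι] (v : ι → ℝ) : ℝ :=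
  Real.sqrt (∑ i, v i ^ 2)

/-- Frobenius norm of a matrix. -/
def frobNorm {ι κ : Type*} [Fintype ι] [Fintype κ] (A : Matrix ι κ ℝ) : ℝ :=
  Real.sqrt (∑ i, ∑ j, A i j ^ 2)

/-- Spectral (operator 2-) norm of a matrix. -/
def spNorm {ι κ : Type*} [Fintype ι] [Fintype κ] (A : Matrix ι κ ℝ) : ℝ :=
  sSup {r : ℝ | ∃ v : κ → ℝ, eNorm v = 1 ∧ r = eNorm (A.mulVec v)}

/-- Smallest singular value of a matrix `A`, i.e. the square root of the smallest
eigenvalue of `A * Aᵀ`, expressed as `inf_{‖u‖ = 1} ‖Aᵀ u‖`. -/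
def sigMin {ι κ : Type*} [Fintype ι] [Fintype κ] (A : Matrix ι κ ℝ) : ℝ :=
  sInf {r : ℝ | ∃ u : ι → ℝ, eNorm u = 1 ∧ r = eNorm (A.vecMul u)}

/-- `ρ(A) < 1` : the spectral radius of the real square matrix `A` (i.e. the
largest modulus of a complex eigenvalue) is smaller than one. -/
def specLt1 {ι : Type*} [Fintype ι] [DecidableEq ι] (A : Matrix ι ι ℝ) : Prop :=
  spectralRadius ℂ (A.map Complex.ofReal) < 1

/-- Right inverse `M† = Mᵀ (M Mᵀ)⁻¹` of a full-row-rank matrix. -/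
def pinv {ι κ : Type*} [Fintype ι] [Fintype κ] [DecidableEq ι] (A : Matrix ι κ ℝ) :
    Matrix κ ι ℝ :=
  Aᵀ * (A * Aᵀ)⁻¹

/-- Orthogonal projection `Π_A = I - A† A` onto the nullspace of `A`. -/
def projNull {ι κ : Type*} [Fintype ι] [Fintype κ] [DecidableEq ι] [DecidableEq κ]
    (A : Matrix ι κ ℝ) : Matrix κ κ ℝ :=
  1 - pinv A * A

/-- `Σ(M) = ∑_{i≥0} Mⁱ (Mᵀ)ⁱ`, the unique solution of the discrete Lyapunov
equation `Σ = I + M Σ Mᵀ` when `ρ(M) < 1`. -/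
def lyap {k : ℕ} (M : Matrix (Fin k) (Fin k) ℝ) : Matrix (Fin k) (Fin k) ℝ :=
  ∑' i : ℕ, M ^ i * (Mᵀ) ^ i

variable {n m t : ℕ}

/-- Stacked data matrix `D₀ = [U₀; X₀]`. -/
def Dmat (U0 : Matrix (Fin m) (Fin t) ℝ) (X0 : Matrix (Fin n) (Fin t) ℝ) :
    Matrix (Fin m ⊕ Fin n) (Fin t) ℝ :=
  Matrix.fromRows U0 X0

/-- `Ū₀ = (1/t) U₀ D₀ᵀ`. -/
def Ubar (U0 : Matrix (Fin m) (Fin t) ℝ) (X0 : Matrix (Fin n) (Fin t) ℝ) :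
    Matrix (Fin m) (Fin m ⊕ Fin n) ℝ :=
  (t : ℝ)⁻¹ • (U0 * (Dmat U0 X0)ᵀ)

/-- `X̄₀ = (1/t) X₀ D₀ᵀ`. -/
def Xbar0 (U0 : Matrix (Fin m) (Fin t) ℝ) (X0 : Matrix (Fin n) (Fin t) ℝ) :
    Matrix (Fin n) (Fin m ⊕ Fin n) ℝ :=
  (t : ℝ)⁻¹ • (X0 * (Dmat U0 X0)ᵀ)

/-- `X̄₁ = (1/t) X₁ D₀ᵀ`. -/
def Xbar1 (U0 : Matrix (Fin m) (Fin t) ℝ) (X0 X1 : Matrix (Fin n) (Fin t) ℝ) :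
    Matrix (Fin n) (Fin m ⊕ Fin n) ℝ :=
  (t : ℝ)⁻¹ • (X1 * (Dmat U0 X0)ᵀ)

/-- Sample covariance `Φ = (1/t) D₀ D₀ᵀ`. -/
def Phi (U0 : Matrix (Fin m) (Fin t) ℝ) (X0 : Matrix (Fin n) (Fin t) ℝ) :
    Matrix (Fin m ⊕ Fin n) (Fin m ⊕ Fin n) ℝ :=
  (t : ℝ)⁻¹ • (Dmat U0 X0 * (Dmat U0 X0)ᵀ)

/-- The feasible set `S = {V : X̄₀ V = I, ρ(X̄₁ V) < 1}`. -/
def feasSet (U0 : Matrix (Fin m) (Fin t) ℝ) (X0 X1 : Matrix (Fin n) (Fin t) ℝ) :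
    Set (Matrix (Fin m ⊕ Fin n) (Fin n) ℝ) :=
  {V | Xbar0 U0 X0 * V = 1 ∧ specLt1 (Xbar1 U0 X0 X1 * V)}

/-- The closed-loop Lyapunov solution `Σ_V`, i.e. the unique solution of
`Σ_V = I + (X̄₁ V) Σ_V (X̄₁ V)ᵀ` when `V ∈ S`. -/
def SigV (U0 : Matrix (Fin m) (Fin t) ℝ) (X0 X1 : Matrix (Fin n) (Fin t) ℝ)
    (V : Matrix (Fin m ⊕ Fin n) (Fin n) ℝ) : Matrix (Fin n) (Fin n) ℝ :=
  lyap (Xbar1 U0 X0 X1 * V)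

/-- `P_V`, the unique solution of `P = Q + Vᵀ Ū₀ᵀ R Ū₀ V + (X̄₁V)ᵀ P (X̄₁V)`
when `V ∈ S`, given by its convergent series. -/
def PV (U0 : Matrix (Fin m) (Fin t) ℝ) (X0 X1 : Matrix (Fin n) (Fin t) ℝ)
    (Q : Matrix (Fin n) (Fin n) ℝ) (R : Matrix (Fin m) (Fin m) ℝ)
    (V : Matrix (Fin m ⊕ Fin n) (Fin n) ℝ) : Matrix (Fin n) (Fin n) ℝ :=
  ∑' i : ℕ, ((Xbar1 U0 X0 X1 * V)ᵀ) ^ i *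
      (Q + Vᵀ * (Ubar U0 X0)ᵀ * R * Ubar U0 X0 * V) * (Xbar1 U0 X0 X1 * V) ^ i

/-- The covariance-parameterized LQR cost `J(V)`. -/
def Jcost (U0 : Matrix (Fin m) (Fin t) ℝ) (X0 X1 : Matrix (Fin n) (Fin t) ℝ)
    (Q : Matrix (Fin n) (Fin n) ℝ) (R : Matrix (Fin m) (Fin m) ℝ)
    (V : Matrix (Fin m ⊕ Fin n) (Fin n) ℝ) : ℝ :=
  Matrix.trace ((Q + Vᵀ * (Ubar U0 X0)ᵀ * R * Ubar U0 X0 * V) * SigV U0 X0 X1 V)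

/-- `J* = inf_{V ∈ S} J(V)`. -/
def Jstar (U0 : Matrix (Fin m) (Fin t) ℝ) (X0 X1 : Matrix (Fin n) (Fin t) ℝ)
    (Q : Matrix (Fin n) (Fin n) ℝ) (R : Matrix (Fin m) (Fin m) ℝ) : ℝ :=
  sInf (Jcost U0 X0 X1 Q R '' feasSet U0 X0 X1)

/-- Sublevel set `S(a) = {V ∈ S : J(V) ≤ a}`. -/
def subLevel (U0 : Matrix (Fin m) (Fin t) ℝ) (X0 X1 : Matrix (Fin n) (Fin t) ℝ)
    (Q : Matrix (Fin n) (Fin n) ℝ) (R : Matrix (Fin m) (Fin m) ℝ) (a : ℝ) :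
    Set (Matrix (Fin m ⊕ Fin n) (Fin n) ℝ) :=
  {V | V ∈ feasSet U0 X0 X1 ∧ Jcost U0 X0 X1 Q R V ≤ a}

/-- The gradient `∇J(V) = 2 (Ū₀ᵀ R Ū₀ + X̄₁ᵀ P_V X̄₁) V Σ_V`. -/
def gradJ (U0 : Matrix (Fin m) (Fin t) ℝ) (X0 X1 : Matrix (Fin n) (Fin t) ℝ)
    (Q : Matrix (Fin n) (Fin n) ℝ) (R : Matrix (Fin m) (Fin m) ℝ)
    (V : Matrix (Fin m ⊕ Fin n) (Fin n) ℝ) : Matrix (Fin m ⊕ Fin n) (Fin n) ℝ :=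
  (2 : ℝ) • (((Ubar U0 X0)ᵀ * R * Ubar U0 X0 +
      (Xbar1 U0 X0 X1)ᵀ * PV U0 X0 X1 Q R V * Xbar1 U0 X0 X1) * V * SigV U0 X0 X1 V)

/-- `ξ(a) = ‖Ū₀‖² ‖R‖ + ‖X̄₁‖² a`. -/
def xiC (U0 : Matrix (Fin m) (Fin t) ℝ) (X0 X1 : Matrix (Fin n) (Fin t) ℝ)
    (R : Matrix (Fin m) (Fin m) ℝ) (a : ℝ) : ℝ :=
  spNorm (Ubar U0 X0) ^ 2 * spNorm R + spNorm (Xbar1 U0 X0 X1) ^ 2 * a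

/-- Smoothness constant `l(a)`. -/
def lC (U0 : Matrix (Fin m) (Fin t) ℝ) (X0 X1 : Matrix (Fin n) (Fin t) ℝ)
    (Q : Matrix (Fin n) (Fin n) ℝ) (R : Matrix (Fin m) (Fin m) ℝ) (a : ℝ) : ℝ :=
  4 * a ^ 2 * (xiC U0 X0 X1 R a + a - sigMin Q) * frobNorm (Xbar1 U0 X0 X1) ^ 2 / sigMin Q ^ 2 +
    2 * xiC U0 X0 X1 R a * a / sigMin Q

/-- Gradient-dominance constant `μ(a) = 4a²/(σ̲(Q)^{3/2} σ̲(R)^{1/2} σ̲(Ū₀))`. -/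
def muC (U0 : Matrix (Fin m) (Fin t) ℝ) (X0 : Matrix (Fin n) (Fin t) ℝ)
    (Q : Matrix (Fin n) (Fin n) ℝ) (R : Matrix (Fin m) (Fin m) ℝ) (a : ℝ) : ℝ :=
  4 * a ^ 2 / (Real.sqrt (sigMin Q) ^ 3 * Real.sqrt (sigMin R) * sigMin (Ubar U0 X0))

/-- Reparameterized cost `f(L, Σ) = Tr(QΣ) + Tr(L Σ⁻¹ Lᵀ Ū₀ᵀ R Ū₀)`. -/
def fRep (U0 : Matrix (Fin m) (Fin t) ℝ) (X0 : Matrix (Fin n) (Fin t) ℝ)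
    (Q : Matrix (Fin n) (Fin n) ℝ) (R : Matrix (Fin m) (Fin m) ℝ)
    (L : Matrix (Fin m ⊕ Fin n) (Fin n) ℝ) (Sg : Matrix (Fin n) (Fin n) ℝ) : ℝ :=
  Matrix.trace (Q * Sg) + Matrix.trace (L * Sg⁻¹ * Lᵀ * (Ubar U0 X0)ᵀ * R * Ubar U0 X0)

/-- Feasible set `ℒ` of the convex reparameterization. -/
def repSet (U0 : Matrix (Fin m) (Fin t) ℝ) (X0 X1 : Matrix (Fin n) (Fin t) ℝ) :
    Set (Matrix (Fin m ⊕ Fin n) (Fin n) ℝ × Matrix (Fin n) (Fin n) ℝ) :=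
  {p | p.2.IsSymm ∧ p.2 = Xbar0 U0 X0 * p.1 ∧
    (Matrix.fromBlocks (p.2 - 1) (Xbar1 U0 X0 X1 * p.1)
      ((Xbar1 U0 X0 X1 * p.1)ᵀ) p.2).PosSemidef}

/-- `p(a) = (16a³/(σ̲(Q)²ζ)) (1 + a/σ̲(Q)) (1 + √(a/σ̲(R)))`. -/
def pC (Q : Matrix (Fin n) (Fin n) ℝ) (R : Matrix (Fin m) (Fin m) ℝ) (ζ a : ℝ) : ℝ :=
  16 * a ^ 3 / (sigMin Q ^ 2 * ζ) * (1 + a / sigMin Q) * (1 + Real.sqrt (a / sigMin R))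

section AuxDecay

open Filter Topology
open scoped ENNReal NNReal

attribute [local instance] Matrix.linftyOpNormedRing Matrix.linftyOpNormedAlgebra

/-- Entrywise geometric decay of powers of a matrix with spectral radius `< 1`. -/
lemma specLt1_decay {k : ℕ} {A : Matrix (Fin k) (Fin k) ℝ} (hA : specLt1 A) :
    ∃ C r : ℝ, 0 ≤ C ∧ 0 ≤ r ∧ r < 1 ∧ ∀ (p : ℕ) (i j : Fin k), |(A ^ p) i j| ≤ C * r ^ p := by
  classical
  have hA' : spectralRadius ℂ (A.map Complex.ofReal) < 1 := hA
  obtain ⟨ρ, hρ1, hρ2⟩ := ENNReal.lt_iff_exists_nnreal_btwn.mp hA'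
  set B : Matrix (Fin k) (Fin k) ℂ := A.map Complex.ofReal with hBdef
  have hgel := spectrum.pow_nnnorm_pow_one_div_tendsto_nhds_spectralRadius B
  have hev := hgel.eventually_lt_const hρ1
  obtain ⟨N, hN⟩ := Filter.eventually_atTop.mp hev
  set s : ℝ := max (ρ : ℝ) (1 / 2) with hsdef
  have hs0 : 0 < s := lt_max_of_lt_right one_half_pos
  have hs1 : s < 1 := max_lt (by exact_mod_cast hρ2) one_half_lt_one
  have hmap : ∀ p : ℕ, B ^ p = (A ^ p).map Complex.ofReal := by
    intro p
    induction p with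
    | zero => simp [hBdef, Matrix.map_one]
    | succ p ih =>
        rw [pow_succ, pow_succ, ih, hBdef]
        exact (Matrix.map_mul (f := Complex.ofRealHom)).symm
  have hent : ∀ (M : Matrix (Fin k) (Fin k) ℂ) (i j : Fin k), ‖M i j‖ ≤ ‖M‖ := by
    intro M i j
    have h1 : ‖M i j‖₊ ≤ ∑ l, ‖M i l‖₊ :=
      Finset.single_le_sum (f := fun l => ‖M i l‖₊) (fun l _ => (zero_le : (0 : NNReal) ≤ _)) (Finset.mem_univ j)
    have h2 : (∑ l, ‖M i l‖₊) ≤ ‖M‖₊ := by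
      rw [Matrix.linfty_opNNNorm_def]
      exact Finset.le_sup (f := fun i => ∑ l, ‖M i l‖₊) (Finset.mem_univ i)
    exact_mod_cast h1.trans h2
  have hbound : ∀ p : ℕ, N ≤ p → 0 < p → ‖B ^ p‖ ≤ s ^ p := by
    intro p hNp hp0
    have h1 := hN p hNp
    have hpne : (p : ℝ) ≠ 0 := by positivity
    have h2 : ((‖B ^ p‖₊ : ℝ≥0∞) ^ (1 / (p : ℝ))) ^ (p : ℝ) < ((ρ : ℝ≥0∞)) ^ (p : ℝ) :=
      ENNReal.rpow_lt_rpow h1 (by positivity)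
    rw [← ENNReal.rpow_mul, one_div_mul_cancel hpne, ENNReal.rpow_one,
      ENNReal.rpow_natCast, ← ENNReal.coe_pow, ENNReal.coe_lt_coe] at h2
    have h3 : ‖B ^ p‖ ≤ (ρ : ℝ) ^ p := by
      have := h2.le
      exact_mod_cast this
    exact h3.trans (pow_le_pow_left₀ ρ.coe_nonneg (le_max_left _ _) p)
  set C : ℝ := 1 + ∑ q ∈ Finset.range (N + 1), ‖B ^ q‖ / s ^ q with hCdef
  have hC1 : (1 : ℝ) ≤ C := by
    have : (0 : ℝ) ≤ ∑ q ∈ Finset.range (N + 1), ‖B ^ q‖ / s ^ q :=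
      Finset.sum_nonneg fun q _ => div_nonneg (norm_nonneg _) (by positivity)
    rw [hCdef]
    linarith
  refine ⟨C, s, by linarith, hs0.le, hs1, fun p i j => ?_⟩
  have hBp : ‖B ^ p‖ ≤ C * s ^ p := by
    rcases le_or_gt p N with hpN | hpN
    · have hterm : ‖B ^ p‖ / s ^ p ≤ ∑ q ∈ Finset.range (N + 1), ‖B ^ q‖ / s ^ q :=
        Finset.single_le_sum (f := fun q => ‖B ^ q‖ / s ^ q)
          (fun q _ => div_nonneg (norm_nonneg _) (by positivity))
          (Finset.mem_range.mpr (by omega))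
      have hsp : (0 : ℝ) < s ^ p := by positivity
      rw [div_le_iff₀ hsp] at hterm
      calc ‖B ^ p‖ ≤ (∑ q ∈ Finset.range (N + 1), ‖B ^ q‖ / s ^ q) * s ^ p := hterm
        _ ≤ C * s ^ p := by
            apply mul_le_mul_of_nonneg_right _ hsp.le
            linarith
    · have := hbound p hpN.le (by omega)
      calc ‖B ^ p‖ ≤ s ^ p := this
        _ ≤ C * s ^ p := by nlinarith [pow_pos hs0 p]
  have : |(A ^ p) i j| = ‖(B ^ p) i j‖ := by
    rw [hmap p, Matrix.map_apply, Complex.norm_real, Real.norm_eq_abs]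
  rw [this]
  exact (hent _ i j).trans hBp

end AuxDecay

section AuxLyap

open Filter Topology

variable {k : ℕ}

lemma pow_tendsto_zero {A : Matrix (Fin k) (Fin k) ℝ} (hA : specLt1 A) :
    Tendsto (fun p => A ^ p) atTop (𝓝 (0 : Matrix (Fin k) (Fin k) ℝ)) := by
  obtain ⟨C, r, hC, hr0, hr1, hbd⟩ := specLt1_decay hA
  refine tendsto_pi_nhds.mpr ?_
  intro i
  rw [tendsto_pi_nhds]
  intro j
  have hg : Tendsto (fun p : ℕ => C * r ^ p) atTop (𝓝 (C * 0)) :=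
    (tendsto_pow_atTop_nhds_zero_of_lt_one hr0 hr1).const_mul C
  rw [mul_zero] at hg
  have h0 : (0 : Matrix (Fin k) (Fin k) ℝ) i j = 0 := rfl
  rw [h0]
  exact squeeze_zero_norm (fun p => by rw [Real.norm_eq_abs]; exact hbd p i j) hg

lemma lyap_hasSum {A : Matrix (Fin k) (Fin k) ℝ} (hA : specLt1 A) :
    HasSum (fun p => A ^ p * Aᵀ ^ p) (lyap A) := by
  obtain ⟨C, r, hC, hr0, hr1, hbd⟩ := specLt1_decay hA
  have hsum : Summable (fun p => A ^ p * Aᵀ ^ p) := by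
    refine Pi.summable.mpr ?_
    intro i
    rw [Pi.summable]
    intro j
    apply Summable.of_norm_bounded (g := fun p => (k * C ^ 2) * (r ^ 2) ^ p)
      (((summable_geometric_of_lt_one (by positivity) (by nlinarith)).mul_left _))
    intro p
    have hentry : (A ^ p * Aᵀ ^ p) i j = ∑ l, (A ^ p) i l * (A ^ p) j l := by
      rw [Matrix.mul_apply]
      congr 1
      ext l
      rw [← Matrix.transpose_pow, Matrix.transpose_apply]
    rw [Real.norm_eq_abs, hentry]
    calc |∑ l, (A ^ p) i l * (A ^ p) j l| ≤ ∑ l, |(A ^ p) i l * (A ^ p) j l| :=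
          Finset.abs_sum_le_sum_abs _ _
      _ ≤ ∑ l : Fin k, (C * r ^ p) * (C * r ^ p) := by
          apply Finset.sum_le_sum
          intro l _
          rw [abs_mul]
          exact mul_le_mul (hbd p i l) (hbd p j l) (abs_nonneg _) (by positivity)
      _ = (k * C ^ 2) * (r ^ 2) ^ p := by
          rw [Finset.sum_const, Finset.card_univ, Fintype.card_fin]
          push_cast
          ring
  have : lyap A = ∑' p, A ^ p * Aᵀ ^ p := rfl
  rw [this]
  exact hsum.hasSum

lemma lyap_fixed {A : Matrix (Fin k) (Fin k) ℝ} (hA : specLt1 A) :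
    lyap A = 1 + A * lyap A * Aᵀ := by
  have hf := lyap_hasSum hA
  set f : ℕ → Matrix (Fin k) (Fin k) ℝ := fun p => A ^ p * Aᵀ ^ p with hfdef
  have hshift : ∀ p, f (p + 1) = A * f p * Aᵀ := by
    intro p
    show A ^ (p + 1) * Aᵀ ^ (p + 1) = A * (A ^ p * Aᵀ ^ p) * Aᵀ
    rw [pow_succ' A, pow_succ Aᵀ]
    simp only [mul_assoc]
  have φcont : Continuous (fun X : Matrix (Fin k) (Fin k) ℝ => A * X * Aᵀ) :=
    (continuous_const.matrix_mul continuous_id).matrix_mul continuous_const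
  let φ : Matrix (Fin k) (Fin k) ℝ →+ Matrix (Fin k) (Fin k) ℝ :=
    AddMonoidHom.mk' (fun X => A * X * Aᵀ) (fun X Y => by
      simp [Matrix.mul_add, Matrix.add_mul])
  have hφc : Continuous ⇑φ := φcont
  have h1 : HasSum (fun p => f (p + 1)) (A * lyap A * Aᵀ) := by
    have h := hf.map φ hφc
    have hcoe : ∀ X, φ X = A * X * Aᵀ := fun X => rfl
    have : (⇑φ ∘ f) = fun p => f (p + 1) := funext fun p => by
      rw [Function.comp_apply, hcoe, ← hshift]
    rw [this, hcoe] at h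
    exact h
  have h2 : HasSum (fun p => f (p + 1)) (lyap A - f 0) := by
    rw [hasSum_nat_add_iff 1]
    simpa using hf
  have h3 : A * lyap A * Aᵀ = lyap A - f 0 := h1.unique h2
  have hf0 : f 0 = 1 := by simp [hfdef]
  rw [hf0] at h3
  rw [h3]
  abel

lemma posSemidef_of_tendsto {f : ℕ → Matrix (Fin k) (Fin k) ℝ} {S : Matrix (Fin k) (Fin k) ℝ}
    (hf : Tendsto f atTop (𝓝 S)) (hp : ∀ p, (f p).PosSemidef) : S.PosSemidef := by
  refine Matrix.PosSemidef.of_dotProduct_mulVec_nonneg ?_ ?_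
  · have hc : Tendsto (fun p => (f p)ᴴ) atTop (𝓝 Sᴴ) :=
      ((continuous_id.matrix_conjTranspose).tendsto S).comp hf
    have h2 : (fun p => (f p)ᴴ) = f := funext fun p => (hp p).1
    rw [h2] at hc
    exact tendsto_nhds_unique hc hf
  · intro x
    have hc : Continuous fun M : Matrix (Fin k) (Fin k) ℝ => star x ⬝ᵥ M *ᵥ x :=
      continuous_const.dotProduct (continuous_id.matrix_mulVec continuous_const)
    have := (hc.tendsto S).comp hf
    exact ge_of_tendsto' this fun p => (hp p).dotProduct_mulVec_nonneg x

lemma psd_sum_range {g : ℕ → Matrix (Fin k) (Fin k) ℝ} (hg : ∀ p, (g p).PosSemidef) (N : ℕ) :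
    (∑ p ∈ Finset.range N, g p).PosSemidef := by
  induction N with
  | zero => simpa using Matrix.PosSemidef.zero
  | succ N ih => rw [Finset.sum_range_succ]; exact ih.add (hg N)

lemma trace_mul_psd_nonneg {W D : Matrix (Fin k) (Fin k) ℝ}
    (hW : W.PosSemidef) (hD : D.PosSemidef) : 0 ≤ (W * D).trace := by
  obtain ⟨B, rfl⟩ : ∃ B : Matrix (Fin k) (Fin k) ℝ, W = Bᴴ * B := by
    open scoped MatrixOrder in
    exact ⟨CFC.sqrt W, by rw [(CFC.sqrt_nonneg W).posSemidef.1.eq, CFC.sqrt_mul_sqrt_self W hW.nonneg]⟩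
  rw [Matrix.mul_assoc, Matrix.trace_mul_comm]
  have hpsd : (B * D * Bᴴ).PosSemidef := hD.mul_mul_conjTranspose_same B
  have hdiag : ∀ i, 0 ≤ (B * D * Bᴴ) i i := by
    intro i
    have h := hpsd.dotProduct_mulVec_nonneg (Pi.single i 1)
    simpa using h
  exact Finset.sum_nonneg fun i _ => hdiag i

end AuxLyap

/-- Minimality of the closed-loop Lyapunov solution: any symmetric `Σ` with
`Σ ⪰ I + X̄₁VΣVᵀX̄₁ᵀ` dominates `Σ_V`, and `J(V)` is the least value of the
relaxed problem, attained at `Σ_V`. -/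
theorem stmt_19 {n m t : ℕ} (hn : 0 < n) (hm : 0 < m) (ht : 0 < t)
    (U0 : Matrix (Fin m) (Fin t) ℝ) (X0 X1 : Matrix (Fin n) (Fin t) ℝ)
    (Q : Matrix (Fin n) (Fin n) ℝ) (R : Matrix (Fin m) (Fin m) ℝ)
    (hQ : Q.PosDef) (hR : R.PosDef)
    (hrank : (Dmat U0 X0).rank = m + n) :
    ∀ V ∈ feasSet U0 X0 X1,
      (∀ Sg : Matrix (Fin n) (Fin n) ℝ, Sg.IsSymm →
        (Sg - (1 + Xbar1 U0 X0 X1 * V * Sg * Vᵀ * (Xbar1 U0 X0 X1)ᵀ)).PosSemidef →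
        (Sg - SigV U0 X0 X1 V).PosSemidef) ∧
      IsLeast {r : ℝ | ∃ Sg : Matrix (Fin n) (Fin n) ℝ, Sg.IsSymm ∧
          (Sg - (1 + Xbar1 U0 X0 X1 * V * Sg * Vᵀ * (Xbar1 U0 X0 X1)ᵀ)).PosSemidef ∧
          r = Matrix.trace ((Q + Vᵀ * (Ubar U0 X0)ᵀ * R * Ubar U0 X0 * V) * Sg)}
        (Jcost U0 X0 X1 Q R V) := by
  
  intro V hV
  obtain ⟨hV0, hVs⟩ := hV
  set A : Matrix (Fin n) (Fin n) ℝ := Xbar1 U0 X0 X1 * V with hAdef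
  have hfix : lyap A = 1 + A * lyap A * Aᵀ := lyap_fixed hVs
  have hf := lyap_hasSum hVs
  have hpsd_terms : ∀ p : ℕ, (A ^ p * Aᵀ ^ p).PosSemidef := by
    intro p
    rw [← Matrix.transpose_pow, ← Matrix.conjTranspose_eq_transpose_of_trivial]
    exact Matrix.posSemidef_self_mul_conjTranspose _
  have hSigPSD : (lyap A).PosSemidef :=
    posSemidef_of_tendsto hf.tendsto_sum_nat fun p => psd_sum_range hpsd_terms p
  have hconj : ∀ (Sg : Matrix (Fin n) (Fin n) ℝ),
      Xbar1 U0 X0 X1 * V * Sg * Vᵀ * (Xbar1 U0 X0 X1)ᵀ = A * Sg * Aᵀ := by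
    intro Sg
    simp only [hAdef, Matrix.transpose_mul, Matrix.mul_assoc]
  have key : ∀ Sg : Matrix (Fin n) (Fin n) ℝ, Sg.IsSymm →
      (Sg - (1 + Xbar1 U0 X0 X1 * V * Sg * Vᵀ * (Xbar1 U0 X0 X1)ᵀ)).PosSemidef →
      (Sg - SigV U0 X0 X1 V).PosSemidef := by
    intro Sg hSym hPSD
    rw [hconj Sg] at hPSD
    set C : Matrix (Fin n) (Fin n) ℝ := Sg - (1 + A * Sg * Aᵀ) with hCdef
    set D : Matrix (Fin n) (Fin n) ℝ := Sg - lyap A with hDdef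
    have hrec : D = C + A * D * Aᵀ := by
      have e1 : A * D * Aᵀ = A * Sg * Aᵀ - A * lyap A * Aᵀ := by
        rw [hDdef, Matrix.mul_sub, Matrix.sub_mul]
      rw [e1, hCdef, hDdef]
      conv_lhs => rw [hfix]
      abel
    have hstep : ∀ p : ℕ, A ^ p * D * Aᵀ ^ p =
        A ^ p * C * Aᵀ ^ p + A ^ (p + 1) * D * Aᵀ ^ (p + 1) := by
      intro p
      conv_lhs => rw [hrec]
      rw [Matrix.mul_add, Matrix.add_mul]
      congr 1
      rw [pow_succ A, pow_succ' Aᵀ]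
      simp only [mul_assoc]
    have htel : ∀ p : ℕ, D - A ^ p * D * Aᵀ ^ p = ∑ i ∈ Finset.range p, A ^ i * C * Aᵀ ^ i := by
      intro p
      induction p with
      | zero => simp
      | succ p ih =>
          rw [Finset.sum_range_succ, ← ih, hstep p]
          abel
    have hCpsd : ∀ i : ℕ, (A ^ i * C * Aᵀ ^ i).PosSemidef := by
      intro i
      rw [← Matrix.transpose_pow, ← Matrix.conjTranspose_eq_transpose_of_trivial]
      exact hPSD.mul_mul_conjTranspose_same _
    have hA0 : Filter.Tendsto (fun p => A ^ p) Filter.atTop (nhds 0) := pow_tendsto_zero hVs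
    have hc : Continuous fun X : Matrix (Fin n) (Fin n) ℝ => D - X * D * Xᵀ :=
      continuous_const.sub ((continuous_id.matrix_mul continuous_const).matrix_mul
        continuous_id.matrix_transpose)
    have hlim : Filter.Tendsto (fun p => D - A ^ p * D * Aᵀ ^ p) Filter.atTop (nhds D) := by
      have := (hc.tendsto 0).comp hA0
      simp only [Function.comp_def] at this
      simpa [Matrix.transpose_pow] using this
    have : D.PosSemidef := by
      apply posSemidef_of_tendsto hlim
      intro p
      rw [htel p]
      exact psd_sum_range hCpsd p
    exact this
  refine ⟨key, ?_, ?_⟩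
  · -- membership: Σ_V itself is feasible and attains the value
    refine ⟨SigV U0 X0 X1 V, ?_, ?_, rfl⟩
    · have := hSigPSD.1
      rwa [Matrix.IsHermitian, Matrix.conjTranspose_eq_transpose_of_trivial] at this
    · rw [hconj]
      have : (SigV U0 X0 X1 V : Matrix (Fin n) (Fin n) ℝ) -
          (1 + A * SigV U0 X0 X1 V * Aᵀ) = 0 := by
        have hSig : SigV U0 X0 X1 V = lyap A := rfl
        rw [hSig, ← hfix]
        abel
      rw [this]
      exact Matrix.PosSemidef.zero
  · -- lower bound
    rintro r ⟨Sg, hSym, hPSD, rfl⟩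
    have hD : (Sg - SigV U0 X0 X1 V).PosSemidef := key Sg hSym hPSD
    set W : Matrix (Fin n) (Fin n) ℝ := Q + Vᵀ * (Ubar U0 X0)ᵀ * R * Ubar U0 X0 * V with hWdef
    have hWpsd : W.PosSemidef := by
      apply hQ.posSemidef.add
      have h2 : (Vᵀ * (Ubar U0 X0)ᵀ * R * Ubar U0 X0 * V) =
          (Ubar U0 X0 * V)ᴴ * R * (Ubar U0 X0 * V) := by
        rw [Matrix.conjTranspose_eq_transpose_of_trivial, Matrix.transpose_mul]
        simp only [Matrix.mul_assoc]
      rw [h2]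
      exact hR.posSemidef.conjTranspose_mul_mul_same _
    have htr : 0 ≤ (W * (Sg - SigV U0 X0 X1 V)).trace := trace_mul_psd_nonneg hWpsd hD
    rw [Matrix.mul_sub, Matrix.trace_sub] at htr
    have : Jcost U0 X0 X1 Q R V = (W * SigV U0 X0 X1 V).trace := rfl
    rw [this]
    linarith
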